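/- If F is a subfield of ℂ and Ψ is a W-graph over F, then ⟨M(Ψ), ind⟩ = dim_{F(u)} M(Ψ)_{ind} ≤ N_Ψ(∅), the number of vertices x of Ψ with I_x = ∅. -/

import Mathlib

open scoped Classical

noncomputable section

/-- The combinatorial data of a `W`-digraph over the index set `B` of the simple reflections:
for each label `i : B`, every vertex `v` lies on exactly one edge with label `i`, joining `v`
to `mate i v ≠ v`; `head i v` records whether `v` is the head (i.e. the edge is directed into
`v`), and `dash i v` whether that edge is dashed (as opposed to solid). -/
structure WDigraphData (B V : Type*) where
  mate : B → V → V
  head : B → V → Bool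
  dash : B → V → Bool
  mate_mate : ∀ i v, mate i (mate i v) = v
  mate_ne : ∀ i v, mate i v ≠ v
  head_mate : ∀ i v, head i (mate i v) = !(head i v)
  dash_mate : ∀ i v, dash i (mate i v) = dash i v

namespace WDigraphData

variable {B V : Type*} (Γ : WDigraphData B V)

/-- `Γ` has a solid edge `a → b` with label `i`. -/
def Solid (i : B) (a b : V) : Prop :=
  Γ.head i a = false ∧ Γ.dash i a = false ∧ Γ.mate i a = b

/-- `Γ` has a dashed edge `a ⇢ b` with label `i`. -/
def Dashed (i : B) (a b : V) : Prop :=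
  Γ.head i a = false ∧ Γ.dash i a = true ∧ Γ.mate i a = b

/-- There is a directed edge (solid or dashed) from `a` to `b` in `Γ`. -/
def DirEdge (a b : V) : Prop :=
  ∃ i, Γ.head i a = false ∧ Γ.mate i a = b

/-- `Γ.In v` is the set of labels of edges of `Γ` directed into `v`. -/
def In (v : V) : Set B := {i | Γ.head i v = true}

/-- `N_Γ(J)`: the number of vertices `v` with `In(v) = J`. -/
def N (J : Set B) : ℕ := Nat.card {v : V // Γ.In v = J}

/-- The underlying undirected graph of `Γ`. -/
def underlying : SimpleGraph V where
  Adj a b := ∃ i, Γ.mate i a = b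
  symm := by
    refine ⟨?_⟩
    rintro a b ⟨i, rfl⟩
    exact ⟨i, Γ.mate_mate i a⟩
  loopless := by
    refine ⟨?_⟩
    rintro a ⟨i, h⟩
    exact Γ.mate_ne i a h

/-- `Γ` contains a closed directed path of positive length. -/
def HasDirCycle : Prop :=
  ∃ (n : ℕ) (f : ℕ → V), 0 < n ∧ f n = f 0 ∧ ∀ k < n, Γ.DirEdge (f k) (f (k + 1))

/-- `Γ` is acyclic: it contains no closed directed path of positive length. -/
def Acyclic : Prop := ¬ Γ.HasDirCycle

/-- The connected component `c` of `Γ` is acyclic: `Γ` has no closed directed path of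
positive length lying in `c`. -/
def AcyclicComponent (c : Γ.underlying.ConnectedComponent) : Prop :=
  ¬ ∃ (n : ℕ) (f : ℕ → V), 0 < n ∧ f n = f 0 ∧
      (∀ k < n, Γ.DirEdge (f k) (f (k + 1))) ∧ Γ.underlying.connectedComponentMk (f 0) = c

/-- `Γ_J`: remove from `Γ` all edges whose labels lie outside `J`. -/
def restrict (J : Set B) : WDigraphData J V where
  mate i v := Γ.mate i v
  head i v := Γ.head i v
  dash i v := Γ.dash i v
  mate_mate i v := Γ.mate_mate i v
  mate_ne i v := Γ.mate_ne i v
  head_mate i v := Γ.head_mate i v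
  dash_mate i v := Γ.dash_mate i v

variable (K : Type*) [Field K] (q : K)

/-- The image of a basis vector `v` under the operator `τ_i` giving the action of `T_{s_i}`
on `M(Γ)`: for a solid edge `α → β` with label `i`, `T_{s_i} α = β` and
`T_{s_i} β = q²α + (q²−1)β`; for a dashed edge `α ⇢ β` with label `i`,
`T_{s_i} α = qα + (q+1)β` and `T_{s_i} β = (q²−q)α + (q²−q−1)β`. -/
def tauFun (i : B) (v : V) : V →₀ K :=
  if Γ.head i v then
    if Γ.dash i v then
      (q ^ 2 - q) • Finsupp.single (Γ.mate i v) 1 + (q ^ 2 - q - 1) • Finsupp.single v 1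
    else
      q ^ 2 • Finsupp.single (Γ.mate i v) 1 + (q ^ 2 - 1) • Finsupp.single v 1
  else
    if Γ.dash i v then
      q • Finsupp.single v 1 + (q + 1) • Finsupp.single (Γ.mate i v) 1
    else
      Finsupp.single (Γ.mate i v) 1

/-- The operator `τ_i` on the free module `M(Γ)` with basis the vertices of `Γ`. -/
def tau (i : B) : (V →₀ K) →ₗ[K] (V →₀ K) :=
  Finsupp.lsum K fun v => LinearMap.toSpanSingleton K (V →₀ K) (Γ.tauFun K q i v)

end WDigraphData

/-- The data of a `W`-graph in the sense of Gyoja: vertex set `X`, vertex labels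
`I x ⊆ B`, and edge weights `mu : X × X → F`. -/
structure WGraphData (B X F : Type*) where
  I : X → Set B
  mu : X → X → F

namespace WGraphData

variable {B X F : Type*} (Ψ : WGraphData B X F)
variable (K : Type*) [Field F] [Field K] [Algebra F K] [Fintype X] (q : K)

/-- The image of the basis vector `x` under the operator by which `T_{s_i}` acts on `M(Ψ)`:
`T_{s_i} x = −x` if `i ∈ I x`, and `T_{s_i} x = q²x + q Σ_{y, i ∈ I y} μ(y,x) y` otherwise. -/
def tauFun (i : B) (x : X) : X →₀ K :=
  if i ∈ Ψ.I x then -Finsupp.single x 1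
  else q ^ 2 • Finsupp.single x 1 +
    q • ∑ y : X, if i ∈ Ψ.I y then algebraMap F K (Ψ.mu y x) • Finsupp.single y (1 : K) else 0

/-- The operator by which `T_{s_i}` acts on the free module `M(Ψ)` with basis `X`. -/
def tau (i : B) : (X →₀ K) →ₗ[K] (X →₀ K) :=
  Finsupp.lsum K fun x => LinearMap.toSpanSingleton K (X →₀ K) (Ψ.tauFun K q i x)

/-- `N_Ψ(J)`: the number of vertices `x` with `I x = J`. -/
def N (J : Set B) : ℕ := Nat.card {x : X // Ψ.I x = J}

end WGraphData

/-- For a module structure on `M` given by an algebra morphism `ρ : H → End M` and a linear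
character `lam` of `H`, the eigenspace `M_lam = {v ∈ M | h v = lam(h) v for all h ∈ H}`. -/
def charSpace {K M H : Type*} [Field K] [AddCommGroup M] [Module K M] [Ring H] [Algebra K H]
    (ρ : H →ₐ[K] Module.End K M) (lam : H →ₐ[K] K) : Submodule K M where
  carrier := {v | ∀ h, ρ h v = lam h • v}
  add_mem' := by
    intro a b ha hb h
    rw [map_add, ha h, hb h, ← smul_add]
  zero_mem' := by
    intro h
    rw [map_zero, smul_zero]
  smul_mem' := by
    intro c a ha h
    rw [map_smul, ha h, smul_comm]

end
noncomputable section
set_option synthInstance.maxHeartbeats 1000000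
set_option maxHeartbeats 1000000


private lemma intDegree_sum_le' {K : Type*} [Field K] {α : Type*} (s : Finset α)
    (f : α → RatFunc K) (d : ℤ) (h : ∀ x ∈ s, f x ≠ 0 → (f x).intDegree ≤ d)
    (hs : (∑ x ∈ s, f x) ≠ 0) : (∑ x ∈ s, f x).intDegree ≤ d := by
  classical
  induction s using Finset.induction with
  | empty => simp at hs
  | @insert a s ha ih =>
    rw [Finset.sum_insert ha] at hs ⊢
    by_cases h0 : (∑ x ∈ s, f x) = 0
    · rw [h0, add_zero] at hs ⊢
      exact h a (Finset.mem_insert_self a s) hs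
    · by_cases hfa : f a = 0
      · rw [hfa, zero_add] at hs ⊢
        exact ih (fun x hx => h x (Finset.mem_insert_of_mem hx)) hs
      · refine le_trans (RatFunc.intDegree_add_le h0 hs) (max_le ?_ ?_)
        · exact h a (Finset.mem_insert_self a s) hfa
        · exact ih (fun x hx => h x (Finset.mem_insert_of_mem hx)) h0

/-- If `F` is a subfield of `ℂ` and `Ψ` is a `W`-graph over `F`, then
`⟨M(Ψ), ind⟩ = dim_{F(u)} M(Ψ)_{ind} ≤ N_Ψ(∅)`, the number of vertices `x` of `Ψ` with
`I_x = ∅`. -/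
theorem wgraph_ind_multiplicity_le
    {B W X : Type*} [Group W] {M : CoxeterMatrix B} (cs : CoxeterSystem M W)
    (F : Subfield ℂ)
    -- `H` is the Hecke algebra of `(W, S)` over `F(u)`, with standard basis `T`
    (H : Type*) [Ring H] [Algebra (RatFunc F) H]
    (T : W → H) (bT : Module.Basis W (RatFunc F) H) (hbT : ∀ w, bT w = T w)
    (hT1 : T 1 = 1)
    (hTmul : ∀ (i : B) (w : W), cs.length w < cs.length (cs.simple i * w) →
      T (cs.simple i) * T w = T (cs.simple i * w))
    (hTsq : ∀ i : B, T (cs.simple i) * T (cs.simple i) =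
      (RatFunc.X ^ 2 : RatFunc F) • (1 : H) +
        ((RatFunc.X ^ 2 - 1 : RatFunc F)) • T (cs.simple i))
    -- `Ψ` is a `W`-graph over `F`, with `H^F`-module `M(Ψ)` given by `σ`
    [Fintype X] (Ψ : WGraphData B X F)
    (σ : H →ₐ[RatFunc F] Module.End (RatFunc F) (X →₀ RatFunc F))
    (hσ : ∀ i : B, σ (T (cs.simple i)) = Ψ.tau (RatFunc F) RatFunc.X i)
    -- `ind` is the index character of `H^F`
    (ind : H →ₐ[RatFunc F] RatFunc F)
    (hind : ∀ w : W, ind (T w) = (RatFunc.X : RatFunc F) ^ (2 * cs.length w)) :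
    Module.finrank (RatFunc F) (charSpace σ ind) ≤ Ψ.N ∅ := by
  classical
  set K := RatFunc F with hK
  set q : RatFunc F := RatFunc.X with hq
  -- Step 1: the eigenvalue equation for vectors in the ind-eigenspace
  have key : ∀ v : X →₀ RatFunc F, (∀ h, σ h v = ind h • v) → ∀ (i : B) (z : X),
      i ∈ Ψ.I z → (q ^ 2 + 1) * v z =
        q * ∑ x : X, (if i ∈ Ψ.I x then 0
          else algebraMap F (RatFunc F) (Ψ.mu z x) * v x) := by
    intro v hv i z hz
    have h1 := hv (T (cs.simple i))
    rw [hσ i, hind, cs.length_simple] at h1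
    have h2 : (Ψ.tau (RatFunc F) RatFunc.X i v) z = q ^ 2 * v z := by
      rw [h1, Finsupp.smul_apply, smul_eq_mul]
    have hexp : Ψ.tau (RatFunc F) RatFunc.X i v
        = ∑ x : X, v x • Ψ.tauFun (RatFunc F) RatFunc.X i x := by
      rw [WGraphData.tau, Finsupp.lsum_apply]
      rw [Finsupp.sum_fintype]
      · simp [LinearMap.toSpanSingleton_apply]
      · intro x; simp
    have h3 : (Ψ.tau (RatFunc F) RatFunc.X i v) z
        = -v z + q * ∑ x : X, (if i ∈ Ψ.I x then 0
            else algebraMap F (RatFunc F) (Ψ.mu z x) * v x) := by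
      rw [hexp, Finsupp.finset_sum_apply]
      have step : ∀ x : X, (v x • Ψ.tauFun (RatFunc F) RatFunc.X i x) z
          = (if x = z then -v z else 0) + q * (if i ∈ Ψ.I x then 0
              else algebraMap F (RatFunc F) (Ψ.mu z x) * v x) := by
        intro x
        rw [Finsupp.smul_apply, smul_eq_mul]
        by_cases hix : i ∈ Ψ.I x
        · rw [WGraphData.tauFun, if_pos hix, if_pos hix]
          rw [Finsupp.neg_apply, Finsupp.single_apply]
          by_cases hxz : x = z
          · subst hxz; simp
          · simp [hxz]
        · have hxz : x ≠ z := fun h => hix (h ▸ hz)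
          rw [WGraphData.tauFun, if_neg hix, if_neg hix]
          rw [Finsupp.add_apply, Finsupp.smul_apply, Finsupp.smul_apply]
          rw [Finsupp.single_apply, if_neg hxz]
          have hsum : (∑ y : X, if i ∈ Ψ.I y
              then algebraMap F (RatFunc F) (Ψ.mu y x) • Finsupp.single y (1 : RatFunc F)
              else 0) z = algebraMap F (RatFunc F) (Ψ.mu z x) := by
            rw [Finsupp.finset_sum_apply]
            rw [Finset.sum_eq_single z]
            · rw [if_pos hz, Finsupp.smul_apply, Finsupp.single_eq_same, smul_eq_mul, mul_one]
            · intro y _ hyz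
              by_cases hiy : i ∈ Ψ.I y
              · rw [if_pos hiy, Finsupp.smul_apply, Finsupp.single_apply, if_neg hyz,
                  smul_zero]
              · rw [if_neg hiy, Finsupp.coe_zero, Pi.zero_apply]
            · intro hzu; exact absurd (Finset.mem_univ z) hzu
          rw [hsum]
          rw [if_neg hxz, smul_zero, smul_eq_mul]
          ring
      rw [Finset.sum_congr rfl (fun x _ => step x), Finset.sum_add_distrib,
        Finset.sum_ite_eq' Finset.univ z (fun _ => -v z), if_pos (Finset.mem_univ z),
        ← Finset.mul_sum]
    rw [h3] at h2
    linear_combination -h2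
  -- Step 2: injectivity of the restriction to vertices with empty label set
  have inj : ∀ v : X →₀ RatFunc F, (∀ h, σ h v = ind h • v) →
      (∀ x : X, Ψ.I x = ∅ → v x = 0) → v = 0 := by
    intro v hv hvan
    by_contra hne
    have hsupp : v.support.Nonempty := Finsupp.support_nonempty_iff.mpr hne
    obtain ⟨z, hzs, hzmax⟩ := v.support.exists_max_image (fun x => (v x).intDegree) hsupp
    have hvz : v z ≠ 0 := Finsupp.mem_support_iff.mp hzs
    have hIz : Ψ.I z ≠ ∅ := fun h => hvz (hvan z h)
    obtain ⟨i, hi⟩ := Set.nonempty_iff_ne_empty.mpr hIz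
    have heq := key v hv i z hi
    set S : RatFunc F := ∑ x : X, (if i ∈ Ψ.I x then 0
      else algebraMap F (RatFunc F) (Ψ.mu z x) * v x) with hS
    have hq21 : (q ^ 2 + 1 : RatFunc F) ≠ 0 := by
      have : (q ^ 2 + 1 : RatFunc F)
          = algebraMap (Polynomial F) (RatFunc F) (Polynomial.X ^ 2 + Polynomial.C 1) := by
        rw [map_add, map_pow, RatFunc.algebraMap_X, Polynomial.C_1, map_one, hq]
      rw [this]
      exact RatFunc.algebraMap_ne_zero
        (Polynomial.X_pow_add_C_ne_zero (by norm_num) 1)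
    have hLHS : (q ^ 2 + 1) * v z ≠ 0 := mul_ne_zero hq21 hvz
    have hSne : S ≠ 0 := by
      intro h0
      rw [h0, mul_zero] at heq
      exact hLHS heq
    have hqne : (q : RatFunc F) ≠ 0 := RatFunc.X_ne_zero
    have hdeg21 : (q ^ 2 + 1 : RatFunc F).intDegree = 2 := by
      have h' : (q ^ 2 + 1 : RatFunc F)
          = algebraMap (Polynomial F) (RatFunc F) (Polynomial.X ^ 2 + Polynomial.C 1) := by
        rw [map_add, map_pow, RatFunc.algebraMap_X, Polynomial.C_1, map_one, hq]
      rw [h', RatFunc.intDegree_polynomial, Polynomial.natDegree_X_pow_add_C]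
      norm_num
    have hdegS : S.intDegree ≤ (v z).intDegree := by
      refine intDegree_sum_le' _ _ _ ?_ hSne
      intro x _ hx0
      have hix : ¬ i ∈ Ψ.I x := by
        intro h; rw [if_pos h] at hx0; exact hx0 rfl
      rw [if_neg hix] at hx0 ⊢
      have hvx : v x ≠ 0 := right_ne_zero_of_mul hx0
      have hmu : algebraMap F (RatFunc F) (Ψ.mu z x) ≠ 0 := left_ne_zero_of_mul hx0
      rw [RatFunc.intDegree_mul hmu hvx]
      have : (algebraMap F (RatFunc F) (Ψ.mu z x)).intDegree = 0 := by
        rw [RatFunc.algebraMap_eq_C]; exact RatFunc.intDegree_C _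
      rw [this, zero_add]
      exact hzmax x (Finsupp.mem_support_iff.mpr hvx)
    have hd1 : ((q ^ 2 + 1) * v z).intDegree = 2 + (v z).intDegree := by
      rw [RatFunc.intDegree_mul hq21 hvz, hdeg21]
    have hd2 : (q * S).intDegree = 1 + S.intDegree := by
      rw [RatFunc.intDegree_mul hqne hSne, RatFunc.intDegree_X]
    rw [heq, hd2] at hd1
    omega
  -- Step 3: conclude via a linear injection into functions on the empty-label vertices
  let π : (X →₀ RatFunc F) →ₗ[RatFunc F] ({x : X // Ψ.I x = ∅} → RatFunc F) :=
    LinearMap.pi (fun z => Finsupp.lapply z.val)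
  let f := π ∘ₗ (charSpace σ ind).subtype
  have hker : ∀ m, f m = 0 → m = 0 := by
    rintro ⟨v, hv⟩ hfv
    have hvan : ∀ x : X, Ψ.I x = ∅ → v x = 0 := by
      intro x hx
      have hfx := congrFun (show (f ⟨v, hv⟩ : {x : X // Ψ.I x = ∅} → RatFunc F) = 0 from hfv) ⟨x, hx⟩
      simpa [f, π, Finsupp.lapply] using hfx
    exact Subtype.ext (inj v hv hvan)
  have hinj : Function.Injective f := fun a b hab => sub_eq_zero.mp (hker (a - b) (by rw [LinearMap.map_sub f a b, hab, sub_self]))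
  have hle := LinearMap.finrank_le_finrank_of_injective hinj
  have hcard : Module.finrank (RatFunc F) ({x : X // Ψ.I x = ∅} → RatFunc F)
      = Ψ.N ∅ := by
    rw [Module.finrank_pi, WGraphData.N, Nat.card_eq_fintype_card]
  rw [hcard] at hle
  exact hle

end
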